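/- Let v,w ∈ L. For all x ∈ E and t ∈ [0, t*(x)): L(v,w)(φ(x,t)) = e^{αt + Λ(x,t)} [ min( inf_{s≥t} J(v,w)(x,s), Kw(x) ) − F(x,t) − Iw(x,t) ]. -/

import Mathlib

open MeasureTheory Filter Set

/-- The class **L** of functions continuous along the flow, with Lipschitz constants. -/
structure IsInL {d : ℕ} (E : Set (EuclideanSpace ℝ (Fin d)))
    (φ : EuclideanSpace ℝ (Fin d) → ℝ → EuclideanSpace ℝ (Fin d))
    (tstar : EuclideanSpace ℝ (Fin d) → ℝ)
    (w : EuclideanSpace ℝ (Fin d) → ℝ) (Cw Lw1 Lw2 Lws : ℝ) : Prop where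
  bdd : ∀ x ∈ E, |w x| ≤ Cw
  cont : ∀ x ∈ E, ContinuousOn (fun t => w (φ x t)) (Set.Ico 0 (tstar x))
  lim : ∀ x ∈ E, Filter.Tendsto (fun t => w (φ x t))
    (nhdsWithin (tstar x) (Set.Iio (tstar x))) (nhds (w (φ x (tstar x))))
  lip1 : ∀ x ∈ E, ∀ y ∈ E, ∀ u ∈ Set.Icc (0:ℝ) (min (tstar x) (tstar y)),
    |w (φ x u) - w (φ y u)| ≤ Lw1 * ‖x - y‖
  lip2 : ∀ x ∈ E, ∀ t ∈ Set.Icc (0:ℝ) (tstar x), ∀ s ∈ Set.Icc (0:ℝ) (tstar x),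
    |w (φ x t) - w (φ x s)| ≤ Lw2 * |t - s|
  lipstar : ∀ x ∈ E, ∀ y ∈ E,
    |w (φ x (tstar x)) - w (φ y (tstar y))| ≤ Lws * ‖x - y‖


lemma aux_intervalIntegrable {g : ℝ → ℝ} {C a b : ℝ}
    (hm : MeasureTheory.AEStronglyMeasurable g (MeasureTheory.volume.restrict (Set.uIoc a b)))
    (hb : ∀ u ∈ Set.uIoc a b, |g u| ≤ C) : IntervalIntegrable g MeasureTheory.volume a b := by
  rw [intervalIntegrable_iff]
  have hfin : MeasureTheory.volume (Set.uIoc a b) < ⊤ := by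
    rw [Set.uIoc]; exact measure_Ioc_lt_top
  refine MeasureTheory.Integrable.mono' (g := fun _ => C)
    ((MeasureTheory.integrableOn_const_iff (C := C)).2 (Or.inr hfin)) hm ?_
  exact (MeasureTheory.ae_restrict_iff' measurableSet_uIoc).2
    (MeasureTheory.ae_of_all _ fun u hu => by simpa [Real.norm_eq_abs] using hb u hu)

theorem stmt_15
    {d : ℕ}
    (E : Set (EuclideanSpace ℝ (Fin d)))
    (hE_open : IsOpen E)
    (φ : EuclideanSpace ℝ (Fin d) → ℝ → EuclideanSpace ℝ (Fin d))
    (hφ_cont : Continuous fun p : EuclideanSpace ℝ (Fin d) × ℝ => φ p.1 p.2)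
    (hφ_homeo : ∀ t : ℝ, ∃ h : EuclideanSpace ℝ (Fin d) ≃ₜ EuclideanSpace ℝ (Fin d), ∀ x, h x = φ x t)
    (hφ_group : ∀ x s t, φ x (t + s) = φ (φ x s) t)
    (tstar : EuclideanSpace ℝ (Fin d) → ℝ)
    (htstar_def : ∀ x ∈ E, tstar x = sInf {t : ℝ | 0 < t ∧ φ x t ∈ frontier E})
    (Ctstar : ℝ) (htstar_bdd : ∀ x ∈ E, tstar x ≤ Ctstar)
    (Ltstar : ℝ) (htstar_lip : ∀ x ∈ E, ∀ y ∈ E, |tstar x - tstar y| ≤ Ltstar * ‖x - y‖)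
    (lam : EuclideanSpace ℝ (Fin d) → ℝ)
    (hlam_meas : Measurable lam)
    (hlam_nonneg : ∀ x, 0 ≤ lam x)
    (Clam : ℝ) (hlam_bdd : ∀ x, lam x ≤ Clam)
    (Llam : ℝ)
    (hlam_lip : ∀ x ∈ E, ∀ y ∈ E, ∀ u : ℝ, 0 ≤ u → u < min (tstar x) (tstar y) →
      |lam (φ x u) - lam (φ y u)| ≤ Llam * ‖x - y‖)
    (Lam : EuclideanSpace ℝ (Fin d) → ℝ → ℝ)
    (hLam_def : ∀ x t, Lam x t = ∫ s in (0:ℝ)..t, lam (φ x s))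
    (α : ℝ) (hα_pos : 0 < α)
    (f : EuclideanSpace ℝ (Fin d) → ℝ) (Cf Lf1 Lf2 Lfs : ℝ)
    (hf_L : IsInL E φ tstar f Cf Lf1 Lf2 Lfs)
    (hf_pos : ∀ x ∈ E, 0 < f x)
    (F : EuclideanSpace ℝ (Fin d) → ℝ → ℝ)
    (hF_def : ∀ x t, F x t =
      ∫ s in (0:ℝ)..(min t (tstar x)), Real.exp (-(α * s) - Lam x s) * f (φ x s))
    (Q : ProbabilityTheory.Kernel (EuclideanSpace ℝ (Fin d)) (EuclideanSpace ℝ (Fin d)))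
    (hQ_markov : ProbabilityTheory.IsMarkovKernel Q)
    (hQ_supp : ∀ x, Q x (E \ {x}) = 1)
    (Qop : (EuclideanSpace ℝ (Fin d) → ℝ) → EuclideanSpace ℝ (Fin d) → ℝ)
    (hQop_def : ∀ (g : EuclideanSpace ℝ (Fin d) → ℝ) (x : EuclideanSpace ℝ (Fin d)), Qop g x = ∫ z, g z ∂(Q x))
    (LQ : ℝ)
    (hQ_lip1 : ∀ (g : EuclideanSpace ℝ (Fin d) → ℝ) (Cg Lg1 Lg2 Lgs : ℝ),
      IsInL E φ tstar g Cg Lg1 Lg2 Lgs →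
      ∀ x ∈ E, ∀ y ∈ E, ∀ u ∈ Set.Icc (0:ℝ) (min (tstar x) (tstar y)),
        |Qop g (φ x u) - Qop g (φ y u)| ≤ LQ * Lg1 * ‖x - y‖)
    (hQ_lipstar : ∀ (g : EuclideanSpace ℝ (Fin d) → ℝ) (Cg Lg1 Lg2 Lgs : ℝ),
      IsInL E φ tstar g Cg Lg1 Lg2 Lgs →
      ∀ x ∈ E, ∀ y ∈ E,
        |Qop g (φ x (tstar x)) - Qop g (φ y (tstar y))| ≤ LQ * Lgs * ‖x - y‖)
    (v : EuclideanSpace ℝ (Fin d) → ℝ) (Cv Lv1 Lv2 Lvs : ℝ)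
    (hv_L : IsInL E φ tstar v Cv Lv1 Lv2 Lvs)
    (w : EuclideanSpace ℝ (Fin d) → ℝ) (Cw Lw1 Lw2 Lws : ℝ)
    (hw_L : IsInL E φ tstar w Cw Lw1 Lw2 Lws)
    (H : (EuclideanSpace ℝ (Fin d) → ℝ) → EuclideanSpace ℝ (Fin d) → ℝ → ℝ)
    (hH_def : ∀ (g : EuclideanSpace ℝ (Fin d) → ℝ) (x : EuclideanSpace ℝ (Fin d)) (t : ℝ), H g x t =
      Real.exp (-(α * min t (tstar x)) - Lam x (min t (tstar x))) * g (φ x (min t (tstar x))))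
    (Iop : (EuclideanSpace ℝ (Fin d) → ℝ) → EuclideanSpace ℝ (Fin d) → ℝ → ℝ)
    (hIop_def : ∀ (g : EuclideanSpace ℝ (Fin d) → ℝ) (x : EuclideanSpace ℝ (Fin d)) (t : ℝ), Iop g x t =
      ∫ s in (0:ℝ)..(min t (tstar x)),
        Real.exp (-(α * s) - Lam x s) * lam (φ x s) * Qop g (φ x s))
    (J : (EuclideanSpace ℝ (Fin d) → ℝ) → (EuclideanSpace ℝ (Fin d) → ℝ) → EuclideanSpace ℝ (Fin d) → ℝ → ℝ)
    (hJ_def : ∀ (g₁ g₂ : EuclideanSpace ℝ (Fin d) → ℝ) (x : EuclideanSpace ℝ (Fin d)) (t : ℝ),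
      J g₁ g₂ x t = F x t + H g₁ x t + Iop g₂ x t)
    (K : (EuclideanSpace ℝ (Fin d) → ℝ) → EuclideanSpace ℝ (Fin d) → ℝ)
    (hK_def : ∀ (g : EuclideanSpace ℝ (Fin d) → ℝ) (x : EuclideanSpace ℝ (Fin d)),
      K g x = F x (tstar x) + H (Qop g) x (tstar x) + Iop g x (tstar x))
    (Lop : (EuclideanSpace ℝ (Fin d) → ℝ) → (EuclideanSpace ℝ (Fin d) → ℝ) → EuclideanSpace ℝ (Fin d) → ℝ)
    (hLop_def : ∀ (g₁ g₂ : EuclideanSpace ℝ (Fin d) → ℝ) (x : EuclideanSpace ℝ (Fin d)),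
      Lop g₁ g₂ x = min (sInf ((fun t => J g₁ g₂ x t) '' Set.Ici (0:ℝ))) (K g₂ x))
    :
    ∀ x ∈ E, ∀ t : ℝ, 0 ≤ t → t < tstar x →
      Lop v w (φ x t) =
        Real.exp (α * t + Lam x t) *
          (min (sInf ((fun s => J v w x s) '' Set.Ici t)) (K w x) - F x t - Iop w x t) := by
  
  intro x hx t ht htlt
  have hτpos : 0 < tstar x := lt_of_le_of_lt ht htlt
  -- φ z 0 = z
  have hφ0 : ∀ z, φ z 0 = z := by
    intro z
    obtain ⟨h, hh⟩ := hφ_homeo 0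
    apply h.injective
    rw [hh, hh, ← hφ_group, add_zero]
  have hgrp : ∀ a b, φ (φ x a) b = φ x (b + a) := fun a b => (hφ_group x a b).symm
  have hφxc : Continuous (fun u : ℝ => φ x u) :=
    hφ_cont.comp (continuous_const.prodMk continuous_id)
  -- the hitting set
  set Sx : Set ℝ := {u : ℝ | 0 < u ∧ φ x u ∈ frontier E} with hSx_def
  have hSxeq : tstar x = sInf Sx := htstar_def x hx
  have hSxbdd : BddBelow Sx := ⟨0, fun u hu => hu.1.le⟩
  have hSxne : Sx.Nonempty := by
    by_contra h
    rw [Set.not_nonempty_iff_eq_empty] at h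
    rw [h, Real.sInf_empty] at hSxeq
    linarith
  have hlb : ∀ u ∈ Sx, tstar x ≤ u := fun u hu => hSxeq ▸ csInf_le hSxbdd hu
  -- the flow stays in E
  have hstay : ∀ u, 0 ≤ u → u < tstar x → φ x u ∈ E := by
    intro u hu0 huτ
    have hsub : (fun u => φ x u) '' (Set.Icc 0 u) ⊆ E ∪ (closure E)ᶜ := by
      rintro _ ⟨r, hr, rfl⟩
      have hnf : φ x r ∉ frontier E := by
        rcases eq_or_lt_of_le hr.1 with h0 | h0
        · rw [← h0, hφ0]
          rw [hE_open.frontier_eq]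
          exact fun hc => hc.2 hx
        · intro hf
          have hmem : r ∈ Sx := ⟨h0, hf⟩
          have := hlb r hmem
          linarith [hr.2]
      by_cases hcl : φ x r ∈ closure E
      · left
        by_contra hne
        exact hnf (by rw [hE_open.frontier_eq]; exact ⟨hcl, hne⟩)
      · right; exact hcl
    have hpc : IsPreconnected ((fun u => φ x u) '' Set.Icc 0 u) :=
      isPreconnected_Icc.image _ hφxc.continuousOn
    have hE := hpc.subset_left_of_subset_union hE_open isClosed_closure.isOpen_compl
      (disjoint_compl_right.mono_left subset_closure) hsub
      ⟨x, ⟨0, ⟨le_refl 0, hu0⟩, hφ0 x⟩, hx⟩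
    exact hE ⟨u, ⟨hu0, le_refl u⟩, rfl⟩
  set y := φ x t with hy_def
  have hy : y ∈ E := hstay t ht htlt
  -- tstar shift
  have hmemy : ∀ u : ℝ, (0 < u ∧ φ y u ∈ frontier E) ↔ u + t ∈ Sx := by
    intro u
    constructor
    · rintro ⟨hu, hf⟩
      refine ⟨by linarith, ?_⟩
      rwa [hy_def, hgrp] at hf
    · rintro ⟨hu, hf⟩
      have h1 : tstar x ≤ u + t := hlb _ ⟨hu, hf⟩
      refine ⟨by linarith, ?_⟩
      rw [hy_def, hgrp]; exact hf
  have hτy : tstar y = tstar x - t := by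
    set Sy : Set ℝ := {u : ℝ | 0 < u ∧ φ y u ∈ frontier E} with hSy_def
    have hSyne : Sy.Nonempty := by
      obtain ⟨u0, hu0⟩ := hSxne
      refine ⟨u0 - t, (hmemy (u0 - t)).2 ?_⟩
      rwa [sub_add_cancel]
    have hglb : IsGLB Sy (tstar x - t) := by
      constructor
      · intro u hu
        have := hlb (u + t) ((hmemy u).1 hu)
        linarith
      · intro b hb
        have hbt : ∀ u ∈ Sx, b + t ≤ u := by
          intro u hu
          have hmem : u - t ∈ Sy := (hmemy (u - t)).2 (by rwa [sub_add_cancel])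
          have := hb hmem
          linarith
        have : b + t ≤ sInf Sx := le_csInf hSxne hbt
        rw [← hSxeq] at this
        linarith
    rw [htstar_def y hy]
    exact hglb.csInf_eq hSyne
  have hτynn : 0 ≤ tstar y := by rw [hτy]; linarith
  -- lam basics
  have hClam0 : 0 ≤ Clam := le_trans (hlam_nonneg 0) (hlam_bdd 0)
  have hlamb : ∀ z, |lam z| ≤ Clam := fun z => abs_le.2 ⟨by linarith [hlam_nonneg z], hlam_bdd z⟩
  have hlamφm : Measurable (fun u : ℝ => lam (φ x u)) := hlam_meas.comp hφxc.measurable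
  have hlamint : ∀ a b : ℝ, IntervalIntegrable (fun u => lam (φ x u)) volume a b := by
    intro a b
    exact aux_intervalIntegrable (hlamφm.aestronglyMeasurable.restrict)
      (fun u _ => hlamb _)
  have hΛfun : (fun u => Lam x u) = fun u => ∫ s in (0:ℝ)..u, lam (φ x s) :=
    funext (hLam_def x)
  have hΛcont : Continuous (fun u => Lam x u) := by
    rw [hΛfun]
    exact intervalIntegral.continuous_primitive hlamint 0
  have hΛnn : ∀ u : ℝ, 0 ≤ u → 0 ≤ Lam x u := by
    intro u hu
    rw [hLam_def]
    exact intervalIntegral.integral_nonneg hu (fun r _ => hlam_nonneg _)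
  -- Lam shift
  have hΛshift : ∀ u : ℝ, Lam y u = Lam x (u + t) - Lam x t := by
    intro u
    have h1 : Lam y u = ∫ r in (0:ℝ)..u, lam (φ x (r + t)) := by
      rw [hLam_def]
      refine intervalIntegral.integral_congr (fun r _ => ?_)
      rw [hy_def, hgrp]
    rw [h1, intervalIntegral.integral_comp_add_right (fun r => lam (φ x r)) t, zero_add,
      ← intervalIntegral.integral_interval_sub_left (hlamint 0 (u + t)) (hlamint 0 t),
      hLam_def x (u + t), hLam_def x t]
  set c := Real.exp (α * t + Lam x t) with hc_def
  have hc : 0 < c := Real.exp_pos _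
  have hexp : ∀ u : ℝ, Real.exp (-(α * u) - Lam y u)
      = c * Real.exp (-(α * (u + t)) - Lam x (u + t)) := by
    intro u
    rw [hc_def, ← Real.exp_add, hΛshift]
    ring_nf
  have hexple1 : ∀ u : ℝ, 0 ≤ u → Real.exp (-(α * u) - Lam x u) ≤ 1 := by
    intro u hu
    rw [Real.exp_le_one_iff]
    have h1 : 0 ≤ α * u := mul_nonneg hα_pos.le hu
    have h2 := hΛnn u hu
    linarith
  -- endpoint bound lemma
  have hB : ∀ (g : EuclideanSpace ℝ (Fin d) → ℝ) (Cg Lg1 Lg2 Lgs : ℝ),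
      IsInL E φ tstar g Cg Lg1 Lg2 Lgs → ∀ u ∈ Set.Icc (0:ℝ) (tstar x), |g (φ x u)| ≤ Cg := by
    intro g Cg Lg1 Lg2 Lgs hg u hu
    rcases lt_or_eq_of_le hu.2 with h | h
    · exact hg.bdd _ (hstay u hu.1 h)
    · subst h
      have hlim := (hg.lim x hx).abs
      refine le_of_tendsto hlim ?_
      have h1 : ∀ᶠ r in nhdsWithin (tstar x) (Set.Iio (tstar x)), 0 < r :=
        eventually_nhdsWithin_of_eventually_nhds (eventually_gt_nhds hτpos)
      have h2 : ∀ᶠ r in nhdsWithin (tstar x) (Set.Iio (tstar x)), r ∈ Set.Iio (tstar x) :=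
        eventually_mem_nhdsWithin
      filter_upwards [h1, h2] with r hr1 hr2
      exact hg.bdd _ (hstay r hr1.le hr2)
  have hCf0 : 0 ≤ Cf := le_trans (abs_nonneg _) (hf_L.bdd x hx)
  have hCv0 : 0 ≤ Cv := le_trans (abs_nonneg _) (hv_L.bdd x hx)
  have hCw0 : 0 ≤ Cw := le_trans (abs_nonneg _) (hw_L.bdd x hx)
  have hfb : ∀ u ∈ Set.Icc (0:ℝ) (tstar x), |f (φ x u)| ≤ Cf :=
    hB f Cf Lf1 Lf2 Lfs hf_L
  have hvb : ∀ u ∈ Set.Icc (0:ℝ) (tstar x), |v (φ x u)| ≤ Cv :=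
    hB v Cv Lv1 Lv2 Lvs hv_L
  -- Qop w : global bound and continuity on E
  haveI := hQ_markov
  have hqb : ∀ z, |Qop w z| ≤ Cw := by
    intro z
    rw [hQop_def]
    have hmeas : MeasurableSet (E \ {z}) := hE_open.measurableSet.diff (measurableSet_singleton z)
    have h0 : (Q z) (E \ {z})ᶜ = 0 := by
      have h1 : (Q z) (E \ {z}) = 1 := hQ_supp z
      have h2 := measure_compl hmeas (measure_ne_top (Q z) _)
      rw [h1] at h2
      simpa using h2
    have hae : ∀ᵐ a ∂(Q z), a ∈ E \ {z} := (MeasureTheory.mem_ae_iff.2 h0)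
    have hbig := MeasureTheory.norm_integral_le_of_norm_le_const (μ := Q z) (f := w) (C := Cw)
      (hae.mono fun a ha => by simpa [Real.norm_eq_abs] using hw_L.bdd a ha.1)
    simpa [Real.norm_eq_abs] using hbig
  have hτnnE : ∀ z ∈ E, 0 ≤ tstar z := by
    intro z hz
    rw [htstar_def z hz]
    exact Real.sInf_nonneg (fun u hu => hu.1.le)
  have hql : ∀ z ∈ E, ∀ z' ∈ E, |Qop w z - Qop w z'| ≤ (LQ * Lw1) * ‖z - z'‖ := by
    intro z hz z' hz'
    have h0 : (0:ℝ) ∈ Set.Icc (0:ℝ) (min (tstar z) (tstar z')) :=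
      ⟨le_refl 0, le_min (hτnnE z hz) (hτnnE z' hz')⟩
    have := hQ_lip1 w Cw Lw1 Lw2 Lws hw_L z hz z' hz' 0 h0
    rwa [hφ0, hφ0] at this
  have hqcontE : ContinuousOn (Qop w) E := by
    have hlip : LipschitzOnWith (LQ * Lw1).toNNReal (Qop w) E := by
      apply LipschitzOnWith.of_dist_le_mul
      intro z hz z' hz'
      rw [Real.dist_eq, dist_eq_norm]
      calc |Qop w z - Qop w z'| ≤ (LQ * Lw1) * ‖z - z'‖ := hql z hz z' hz'
        _ ≤ ((LQ * Lw1).toNNReal : ℝ) * ‖z - z'‖ :=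
          mul_le_mul_of_nonneg_right (Real.le_coe_toNNReal _) (norm_nonneg _)
    exact hlip.continuousOn
  have hqcont : ContinuousOn (fun u : ℝ => Qop w (φ x u)) (Set.Ico 0 (tstar x)) :=
    hqcontE.comp hφxc.continuousOn (fun u hu => hstay u hu.1 hu.2)
  -- a.e. strong measurability helper
  have haesm : ∀ (g : ℝ → ℝ), ContinuousOn g (Set.Ico 0 (tstar x)) → ∀ b, b ≤ tstar x →
      AEStronglyMeasurable g (volume.restrict (Set.Ioc 0 b)) := by
    intro g hg b hb
    have hsub : Set.Ioc 0 b \ {tstar x} ⊆ Set.Ico 0 (tstar x) := by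
      rintro u ⟨hu1, hu2⟩
      exact ⟨hu1.1.le, lt_of_le_of_ne (le_trans hu1.2 hb) (by simpa using hu2)⟩
    have h1 : AEStronglyMeasurable g (volume.restrict (Set.Ioc 0 b \ {tstar x})) :=
      (hg.mono hsub).aestronglyMeasurable (measurableSet_Ioc.diff (measurableSet_singleton _))
    have h2 : (Set.Ioc 0 b : Set ℝ) =ᵐ[volume] (Set.Ioc 0 b \ ({tstar x} : Set ℝ) : Set ℝ) := by
      rw [MeasureTheory.ae_eq_set]
      constructor
      · refine measure_mono_null (t := ({tstar x} : Set ℝ)) (fun u hu => ?_) Real.volume_singleton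
        rcases hu with ⟨hu1, hu2⟩
        simp only [Set.mem_diff, Set.mem_singleton_iff, not_and, not_not] at hu2
        exact hu2 hu1
      · refine measure_mono_null (fun u hu => ?_) (measure_empty (μ := volume))
        exact absurd hu.1.1 hu.2
    rwa [Measure.restrict_congr_set h2]
  have hecont : Continuous (fun r : ℝ => Real.exp (-(α * r) - Lam x r)) :=
    Real.continuous_exp.comp (((continuous_const.mul continuous_id).neg).sub hΛcont)
  -- integrands for x
  set G1 : ℝ → ℝ := fun r => Real.exp (-(α * r) - Lam x r) * f (φ x r) with hG1_def
  set GI : ℝ → ℝ := fun r => Real.exp (-(α * r) - Lam x r) * lam (φ x r) * Qop w (φ x r)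
    with hGI_def
  have hG1int : ∀ b ∈ Set.Icc (0:ℝ) (tstar x), IntervalIntegrable G1 volume 0 b := by
    intro b hb
    apply aux_intervalIntegrable (C := Cf)
    · rw [Set.uIoc_of_le hb.1]
      exact (hecont.aestronglyMeasurable.restrict).mul (haesm _ (hf_L.cont x hx) b hb.2)
    · intro u hu
      rw [Set.uIoc_of_le hb.1] at hu
      have hu0 : 0 ≤ u := hu.1.le
      have huτ : u ≤ tstar x := le_trans hu.2 hb.2
      rw [hG1_def]
      calc |Real.exp (-(α * u) - Lam x u) * f (φ x u)|
          = Real.exp (-(α * u) - Lam x u) * |f (φ x u)| := by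
            rw [abs_mul, abs_of_pos (Real.exp_pos _)]
        _ ≤ 1 * Cf := mul_le_mul (hexple1 u hu0) (hfb u ⟨hu0, huτ⟩) (abs_nonneg _) zero_le_one
        _ = Cf := one_mul Cf
  have hGIint : ∀ b ∈ Set.Icc (0:ℝ) (tstar x), IntervalIntegrable GI volume 0 b := by
    intro b hb
    apply aux_intervalIntegrable (C := Clam * Cw)
    · rw [Set.uIoc_of_le hb.1]
      exact ((hecont.aestronglyMeasurable.restrict).mul hlamφm.aestronglyMeasurable.restrict).mul
        (haesm _ hqcont b hb.2)
    · intro u hu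
      rw [Set.uIoc_of_le hb.1] at hu
      have hu0 : 0 ≤ u := hu.1.le
      rw [hGI_def]
      calc |Real.exp (-(α * u) - Lam x u) * lam (φ x u) * Qop w (φ x u)|
          = Real.exp (-(α * u) - Lam x u) * |lam (φ x u)| * |Qop w (φ x u)| := by
            rw [abs_mul, abs_mul, abs_of_pos (Real.exp_pos _)]
        _ ≤ 1 * Clam * Cw := by
            apply mul_le_mul _ (hqb _) (abs_nonneg _)
            · exact mul_nonneg zero_le_one hClam0
            · exact mul_le_mul (hexple1 u hu0) (hlamb _) (abs_nonneg _) zero_le_one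
        _ = Clam * Cw := by ring
  -- min shift
  have hminshift : ∀ s : ℝ, min s (tstar y) + t = min (t + s) (tstar x) := by
    intro s
    rw [hτy]
    rw [← min_add_add_right s (tstar x - t) t]
    congr 1 <;> ring
  -- H shift
  have hHsh : ∀ (g : EuclideanSpace ℝ (Fin d) → ℝ) (s : ℝ), H g y s = c * H g x (t + s) := by
    intro g s
    rw [hH_def, hH_def, ← hminshift s]
    have hφm : φ x (min s (tstar y) + t) = φ y (min s (tstar y)) := by
      rw [hy_def, hgrp]
    rw [hφm, hexp (min s (tstar y))]
    ring
  -- F shift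
  have hFsh : ∀ s : ℝ, 0 ≤ s → F y s = c * (F x (t + s) - F x t) := by
    intro s hs
    set m := min s (tstar y) with hm_def
    have hm0 : 0 ≤ m := le_min hs hτynn
    have hmem : m + t ∈ Set.Icc (0:ℝ) (tstar x) := by
      rw [hminshift s]
      exact ⟨le_min (by linarith) hτpos.le, min_le_right _ _⟩
    have step1 : F y s = ∫ r in (0:ℝ)..m, c * G1 (r + t) := by
      rw [hF_def]
      refine intervalIntegral.integral_congr (fun r _ => ?_)
      rw [hG1_def]
      simp only []
      rw [hexp r, hy_def, hgrp]
      ring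
    rw [step1, intervalIntegral.integral_const_mul,
      intervalIntegral.integral_comp_add_right G1 t, zero_add,
      ← intervalIntegral.integral_interval_sub_left (hG1int (m + t) hmem)
        (hG1int t ⟨ht, htlt.le⟩)]
    congr 1
    rw [hF_def x (t + s), hF_def x t, min_eq_left htlt.le, ← hminshift s]
  -- I shift
  have hIsh : ∀ s : ℝ, 0 ≤ s → Iop w y s = c * (Iop w x (t + s) - Iop w x t) := by
    intro s hs
    set m := min s (tstar y) with hm_def
    have hm0 : 0 ≤ m := le_min hs hτynn
    have hmem : m + t ∈ Set.Icc (0:ℝ) (tstar x) := by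
      rw [hminshift s]
      exact ⟨le_min (by linarith) hτpos.le, min_le_right _ _⟩
    have step1 : Iop w y s = ∫ r in (0:ℝ)..m, c * GI (r + t) := by
      rw [hIop_def]
      refine intervalIntegral.integral_congr (fun r _ => ?_)
      rw [hGI_def]
      simp only []
      rw [hexp r, hy_def, hgrp]
      ring
    rw [step1, intervalIntegral.integral_const_mul,
      intervalIntegral.integral_comp_add_right GI t, zero_add,
      ← intervalIntegral.integral_interval_sub_left (hGIint (m + t) hmem)
        (hGIint t ⟨ht, htlt.le⟩)]
    congr 1
    rw [hIop_def w x (t + s), hIop_def w x t, min_eq_left htlt.le, ← hminshift s]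
  set D := F x t + Iop w x t with hD_def
  -- K shift
  have hKsh : K w y = c * (K w x - D) := by
    have ht2 : t + tstar y = tstar x := by rw [hτy]; ring
    rw [hK_def, hK_def, hFsh (tstar y) hτynn, hHsh (Qop w) (tstar y), hIsh (tstar y) hτynn,
      ht2, hD_def]
    ring
  -- J shift
  have hJsh : ∀ s : ℝ, 0 ≤ s → J v w y s = c * (J v w x (t + s) - D) := by
    intro s hs
    rw [hJ_def, hJ_def, hFsh s hs, hHsh v s, hIsh s hs, hD_def]
    ring
  -- bounds on J for BddBelow
  have hτub : tstar x ≤ Ctstar := htstar_bdd x hx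
  have hFb : ∀ s : ℝ, 0 ≤ s → |F x s| ≤ Cf * Ctstar := by
    intro s hs
    have hm0 : 0 ≤ min s (tstar x) := le_min hs hτpos.le
    have hmτ : min s (tstar x) ≤ tstar x := min_le_right _ _
    rw [hF_def]
    have hbd : ∀ u ∈ Set.uIoc (0:ℝ) (min s (tstar x)), ‖G1 u‖ ≤ Cf := by
      intro u hu
      rw [Set.uIoc_of_le hm0] at hu
      have hu0 : 0 ≤ u := hu.1.le
      have huτ : u ≤ tstar x := le_trans hu.2 hmτ
      rw [Real.norm_eq_abs, hG1_def]
      calc |Real.exp (-(α * u) - Lam x u) * f (φ x u)|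
          = Real.exp (-(α * u) - Lam x u) * |f (φ x u)| := by
            rw [abs_mul, abs_of_pos (Real.exp_pos _)]
        _ ≤ 1 * Cf := mul_le_mul (hexple1 u hu0) (hfb u ⟨hu0, huτ⟩) (abs_nonneg _) zero_le_one
        _ = Cf := one_mul Cf
    have hbig := intervalIntegral.norm_integral_le_of_norm_le_const hbd
    rw [Real.norm_eq_abs] at hbig
    calc |∫ r in (0:ℝ)..(min s (tstar x)), G1 r| ≤ Cf * |min s (tstar x) - 0| := hbig
      _ ≤ Cf * Ctstar := by
          rw [sub_zero, abs_of_nonneg hm0]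
          exact mul_le_mul_of_nonneg_left (le_trans hmτ hτub) hCf0
  have hIb : ∀ s : ℝ, 0 ≤ s → |Iop w x s| ≤ Clam * Cw * Ctstar := by
    intro s hs
    have hm0 : 0 ≤ min s (tstar x) := le_min hs hτpos.le
    have hmτ : min s (tstar x) ≤ tstar x := min_le_right _ _
    rw [hIop_def]
    have hbd : ∀ u ∈ Set.uIoc (0:ℝ) (min s (tstar x)), ‖GI u‖ ≤ Clam * Cw := by
      intro u hu
      rw [Set.uIoc_of_le hm0] at hu
      have hu0 : 0 ≤ u := hu.1.le
      rw [Real.norm_eq_abs, hGI_def]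
      calc |Real.exp (-(α * u) - Lam x u) * lam (φ x u) * Qop w (φ x u)|
          = Real.exp (-(α * u) - Lam x u) * |lam (φ x u)| * |Qop w (φ x u)| := by
            rw [abs_mul, abs_mul, abs_of_pos (Real.exp_pos _)]
        _ ≤ 1 * Clam * Cw := by
            apply mul_le_mul _ (hqb _) (abs_nonneg _)
            · exact mul_nonneg zero_le_one hClam0
            · exact mul_le_mul (hexple1 u hu0) (hlamb _) (abs_nonneg _) zero_le_one
        _ = Clam * Cw := by ring
    have hbig := intervalIntegral.norm_integral_le_of_norm_le_const hbd
    rw [Real.norm_eq_abs] at hbig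
    calc |∫ r in (0:ℝ)..(min s (tstar x)), GI r| ≤ Clam * Cw * |min s (tstar x) - 0| := hbig
      _ ≤ Clam * Cw * Ctstar := by
          rw [sub_zero, abs_of_nonneg hm0]
          exact mul_le_mul_of_nonneg_left (le_trans hmτ hτub)
            (mul_nonneg hClam0 hCw0)
  have hHb : ∀ s : ℝ, 0 ≤ s → |H v x s| ≤ Cv := by
    intro s hs
    have hm0 : 0 ≤ min s (tstar x) := le_min hs hτpos.le
    have hmτ : min s (tstar x) ≤ tstar x := min_le_right _ _
    rw [hH_def]
    calc |Real.exp (-(α * min s (tstar x)) - Lam x (min s (tstar x))) * v (φ x (min s (tstar x)))|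
        = Real.exp (-(α * min s (tstar x)) - Lam x (min s (tstar x)))
            * |v (φ x (min s (tstar x)))| := by
          rw [abs_mul, abs_of_pos (Real.exp_pos _)]
      _ ≤ 1 * Cv := mul_le_mul (hexple1 _ hm0) (hvb _ ⟨hm0, hmτ⟩) (abs_nonneg _) zero_le_one
      _ = Cv := one_mul Cv
  set S := (fun s => J v w x s) '' Set.Ici t with hS_def
  have hSne : S.Nonempty := ⟨J v w x t, t, Set.self_mem_Ici, rfl⟩
  have hSbdd : BddBelow S := by
    refine ⟨-(Cf * Ctstar + Cv + Clam * Cw * Ctstar), ?_⟩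
    rintro r ⟨s, hs, rfl⟩
    have hs0 : 0 ≤ s := le_trans ht hs
    have h1 := hFb s hs0
    have h2 := hHb s hs0
    have h3 := hIb s hs0
    simp only [hJ_def]
    linarith [(abs_le.1 h1).1, (abs_le.1 h2).1, (abs_le.1 h3).1]
  -- image identity
  have himg : (fun s => J v w y s) '' Set.Ici 0 = (fun r => c * (r - D)) '' S := by
    rw [hS_def]
    ext r
    simp only [Set.mem_image, Set.mem_Ici]
    constructor
    · rintro ⟨s, hs, rfl⟩
      exact ⟨J v w x (t + s), ⟨t + s, by linarith, rfl⟩, (hJsh s hs).symm⟩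
    · rintro ⟨_, ⟨s, hs, rfl⟩, rfl⟩
      refine ⟨s - t, by linarith, ?_⟩
      rw [hJsh (s - t) (by linarith), show t + (s - t) = s from by ring]
  -- sInf of affine image
  have hsinf : sInf ((fun r => c * (r - D)) '' S) = c * (sInf S - D) := by
    have hmono : Monotone (fun r => c * (r - D)) := fun a b hab =>
      mul_le_mul_of_nonneg_left (sub_le_sub_right hab D) hc.le
    have hcont : ContinuousAt (fun r => c * (r - D)) (sInf S) :=
      (continuous_const.mul (continuous_id.sub continuous_const)).continuousAt
    exact (Monotone.map_csInf_of_continuousAt hcont hmono hSne hSbdd).symm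
  -- assemble
  rw [hLop_def]
  rw [show ((fun t' => J v w (φ x t) t') '' Set.Ici (0:ℝ)) = (fun s => J v w y s) '' Set.Ici 0
    from rfl]
  rw [himg, hsinf]
  rw [show K w (φ x t) = K w y from rfl, hKsh]
  rw [← mul_min_of_nonneg _ _ hc.le]
  have hminsub : min (sInf S - D) (K w x - D) = min (sInf S) (K w x) - D := by
    rcases le_total (sInf S) (K w x) with h | h
    · rw [min_eq_left h, min_eq_left (by linarith)]
    · rw [min_eq_right h, min_eq_right (by linarith)]
  rw [hminsub, hc_def, hD_def]
  ring
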